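/- Proposition 1 (optimality of the EFF recovery policy, pathwise form): with the reserve-crew setup, let σ* be any recovery policy that follows the EFF rule and σ be any recovery policy. Then for every time u ∈ ℝ, N_{σ*}(u) ≥ N_{σ}(u); i.e., when maximizing the number of reserve crew available at any point in time, an Earliest-Finisher-First recovery policy is optimal. -/

import Mathlib

/-- Crew member `c` is on duty at time `u` iff `b c ≤ u ≤ e c`. -/
def OnDuty {C : Type*} (b e : C → ℝ) (c : C) (u : ℝ) : Prop :=
  b c ≤ u ∧ u ≤ e c

/-- Crew member `c` is unassigned by `σ` to any demand `j < i`. -/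
def UnassignedBefore {C : Type*} {m : ℕ} (σ : Fin m → Option C) (i : Fin m) (c : C) : Prop :=
  ∀ j : Fin m, j < i → σ j ≠ some c

/-- A recovery policy: (i) no crew member is assigned to two demands, (ii) assigned
crew members are on duty at the demand time, (iii) must-serve: a demand is left
unserved only if no crew member is on duty at its time and unassigned to an
earlier demand. -/
def IsPolicy {C : Type*} (b e : C → ℝ) {m : ℕ} (t : Fin m → ℝ)
    (σ : Fin m → Option C) : Prop :=
  (∀ i j : Fin m, ∀ c : C, σ i = some c → σ j = some c → i = j) ∧
  (∀ i : Fin m, ∀ c : C, σ i = some c → OnDuty b e c (t i)) ∧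
  (∀ i : Fin m, σ i = none → ¬ ∃ c : C, OnDuty b e c (t i) ∧ UnassignedBefore σ i c)

/-- The Earliest-Finisher-First rule: whenever some crew member is available
(on duty and unassigned to earlier demands), the policy assigns an available
crew member with minimal shift end time among all available crew members. -/
def FollowsEFF {C : Type*} (b e : C → ℝ) {m : ℕ} (t : Fin m → ℝ)
    (σ : Fin m → Option C) : Prop :=
  ∀ i : Fin m, (∃ c : C, OnDuty b e c (t i) ∧ UnassignedBefore σ i c) →
    ∃ c : C, σ i = some c ∧ OnDuty b e c (t i) ∧ UnassignedBefore σ i c ∧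
      ∀ c' : C, OnDuty b e c' (t i) → UnassignedBefore σ i c' → e c ≤ e c'

/-- `NAvail b e t σ u` is the number of reserve crew members available at time `u`
under policy `σ`: those on duty at `u` and not assigned to any demand at or before
time `u`. -/
noncomputable def NAvail {C : Type*} (b e : C → ℝ) {m : ℕ} (t : Fin m → ℝ)
    (σ : Fin m → Option C) (u : ℝ) : ℕ :=
  Set.ncard {c : C | OnDuty b e c u ∧ ∀ j : Fin m, σ j = some c → u < t j}

namespace EFFAux

variable {C : Type*} {m : ℕ}

def Asg (σ : Fin m → Option C) (n : ℕ) : Set C := {c | ∃ j : Fin m, (j : ℕ) < n ∧ σ j = some c}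

lemma mem_Asg_succ {σ : Fin m → Option C} {n : ℕ} (hn : n < m) {c : C} :
    c ∈ Asg σ (n + 1) ↔ c ∈ Asg σ n ∨ σ ⟨n, hn⟩ = some c := by
  constructor
  · rintro ⟨j, hj, hje⟩
    rcases Nat.lt_succ_iff_lt_or_eq.mp hj with h | h
    · exact Or.inl ⟨j, h, hje⟩
    · right
      have : j = (⟨n, hn⟩ : Fin m) := Fin.ext h
      rwa [this] at hje
  · rintro (⟨j, hj, hje⟩ | h)
    · exact ⟨j, Nat.lt_succ_of_lt hj, hje⟩
    · exact ⟨⟨n, hn⟩, Nat.lt_succ_self n, h⟩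

lemma unassignedBefore_iff {σ : Fin m → Option C} {i : Fin m} {c : C} :
    UnassignedBefore σ i c ↔ c ∉ Asg σ (i : ℕ) := by
  constructor
  · rintro h ⟨j, hj, hje⟩
    exact h j hj hje
  · intro h j hj hje
    exact h ⟨j, hj, hje⟩

lemma b_mem_le {b e : C → ℝ} {t : Fin m → ℝ} {σ : Fin m → Option C}
    (hpol : IsPolicy b e t σ) {n : ℕ} {c : C} (hc : c ∈ Asg σ n) {s : ℝ}
    (hts : ∀ j : Fin m, (j : ℕ) < n → t j ≤ s) : b c ≤ s := by
  obtain ⟨j, hj, hje⟩ := hc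
  exact le_trans (hpol.2.1 j c hje).1 (hts j hj)


def LS (e : C → ℝ) (σ₁ σ₂ : Fin m → Option C) (n : ℕ) (θ : ℝ) : Set C :=
  {c | c ∈ Asg σ₁ n ∧ c ∉ Asg σ₂ n ∧ θ ≤ e c}

lemma mem_LS {e : C → ℝ} {σ₁ σ₂ : Fin m → Option C} {n : ℕ} {θ : ℝ} {c : C} :
    c ∈ LS e σ₁ σ₂ n θ ↔ c ∈ Asg σ₁ n ∧ c ∉ Asg σ₂ n ∧ θ ≤ e c := Iff.rfl

lemma ncard_le_diff_add_one {α : Type*} {s : Set α} (hs : s.Finite) (a : α) :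
    s.ncard ≤ (s \ {a}).ncard + 1 := by
  have h1 : s ⊆ insert a (s \ {a}) := by
    rw [Set.insert_diff_singleton]
    exact Set.subset_insert _ _
  exact le_trans (Set.ncard_le_ncard h1 (hs.diff.insert a)) (Set.ncard_insert_le _ _)

lemma ncard_insert_le_of_subset {α : Type*} {a : α} {s t : Set α}
    (hsub : insert a s ⊆ t) (ha : a ∉ s) (hs : s.Finite) (htf : t.Finite) :
    s.ncard + 1 ≤ t.ncard := by
  rw [← Set.ncard_insert_of_notMem ha hs]
  exact Set.ncard_le_ncard hsub htf

lemma inv1 {C : Type*} [Fintype C] (b e : C → ℝ) {m : ℕ} (t : Fin m → ℝ) (ht : Monotone t)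
    (σstar σ : Fin m → Option C)
    (hstar : IsPolicy b e t σstar) (heff : FollowsEFF b e t σstar)
    (hσ : IsPolicy b e t σ) :
    ∀ n : ℕ, n ≤ m → ∀ s x : ℝ, s ≤ x →
      (∀ j : Fin m, (j : ℕ) < n → t j ≤ s) →
      (∀ c : C, c ∉ Asg σstar n → b c ≤ s → s ≤ e c → x ≤ e c) →
      (LS e σstar σ n s).ncard ≤ (LS e σ σstar n x).ncard := by
  intro n
  induction n with
  | zero =>
      intro _ s x _ _ _
      have hempty : LS e σstar σ 0 s = ∅ := by
        ext c
        simp [LS, Asg]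
      rw [hempty]
      simp
  | succ i IH =>
      intro hn s x hsx hts hcond
      have him : i < m := hn
      have htfis : t ⟨i, him⟩ ≤ s := hts ⟨i, him⟩ (Nat.lt_succ_self i)
      have htj : ∀ j : Fin m, (j : ℕ) < i → t j ≤ s := fun j hj => hts j (Nat.lt_succ_of_lt hj)
      have htjfi : ∀ j : Fin m, (j : ℕ) < i → t j ≤ t ⟨i, him⟩ :=
        fun j hj => ht (show (j : ℕ) ≤ i from hj.le)
      rcases hse : σstar ⟨i, him⟩ with _ | cstar
      · -- σstar assigns nothing at demand i
        have e1 : Asg σstar (i + 1) = Asg σstar i := by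
          ext c
          rw [mem_Asg_succ him, hse]
          simp
        have eL : LS e σstar σ (i + 1) s ⊆ LS e σstar σ i s := by
          rintro c ⟨h1, h2, h3⟩
          rw [e1] at h1
          exact ⟨h1, fun hc => h2 ((mem_Asg_succ him).mpr (Or.inl hc)), h3⟩
        have eR : LS e σ σstar i x ⊆ LS e σ σstar (i + 1) x := by
          rintro c ⟨h1, h2, h3⟩
          refine ⟨(mem_Asg_succ him).mpr (Or.inl h1), ?_, h3⟩
          rw [e1]
          exact h2
        have hcond2 : ∀ c : C, c ∉ Asg σstar i → b c ≤ s → s ≤ e c → x ≤ e c := by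
          intro c hc
          exact hcond c (by rwa [e1])
        calc (LS e σstar σ (i + 1) s).ncard
            ≤ (LS e σstar σ i s).ncard := Set.ncard_le_ncard eL (Set.toFinite _)
          _ ≤ (LS e σ σstar i x).ncard := IH him.le s x hsx htj hcond2
          _ ≤ (LS e σ σstar (i + 1) x).ncard := Set.ncard_le_ncard eR (Set.toFinite _)
      · -- σstar assigns cstar at demand i
        have hODstar : OnDuty b e cstar (t ⟨i, him⟩) := hstar.2.1 _ cstar hse
        have hUnstar : UnassignedBefore σstar ⟨i, him⟩ cstar := by
          intro j hj hje
          have := hstar.1 j ⟨i, him⟩ cstar hje hse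
          exact absurd this (ne_of_lt hj)
        have hcsA : cstar ∉ Asg σstar i := unassignedBefore_iff.mp hUnstar
        obtain ⟨c₀, hc₀, _, _, hmin₀⟩ := heff ⟨i, him⟩ ⟨cstar, hODstar, hUnstar⟩
        have hc₀e : c₀ = cstar := by
          rw [hse] at hc₀
          exact (Option.some_inj.mp hc₀).symm
        have hmin : ∀ c' : C, c' ∉ Asg σstar i → OnDuty b e c' (t ⟨i, him⟩) → e cstar ≤ e c' := by
          intro c' h1 h2
          have := hmin₀ c' h2 (unassignedBefore_iff.mpr h1)
          rwa [hc₀e] at this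
        have hAs : ∀ c : C, c ∈ Asg σstar (i + 1) ↔ c ∈ Asg σstar i ∨ c = cstar := by
          intro c
          rw [mem_Asg_succ him, hse]
          simp [eq_comm]
        -- from membership in Asg σstar (i+1) and ≠ cstar
        have hAs' : ∀ c : C, c ∈ Asg σstar (i + 1) → c ≠ cstar → c ∈ Asg σstar i := by
          intro c h1 h2
          rcases (hAs c).mp h1 with h | h
          · exact h
          · exact absurd h h2
        have hAs'' : ∀ c : C, c ∉ Asg σstar i → c ≠ cstar → c ∉ Asg σstar (i + 1) := by
          intro c h1 h2 hm
          rcases (hAs c).mp hm with h | h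
          · exact h1 h
          · exact h2 h
        rcases he : σ ⟨i, him⟩ with _ | cv
        · -- σstar some, σ none : must-serve makes the left set empty
          have hA : Asg σ (i + 1) = Asg σ i := by
            ext c
            rw [mem_Asg_succ him, he]
            simp
          have hempty : LS e σstar σ (i + 1) s = ∅ := by
            ext c
            simp only [Set.mem_empty_iff_false, iff_false]
            rintro ⟨h1, h2, h3⟩
            rw [hA] at h2
            have hbc : b c ≤ t ⟨i, him⟩ := by
              rcases (hAs c).mp h1 with hc | hc
              · exact b_mem_le hstar hc htjfi
              · rw [hc]; exact hODstar.1
            have hec : t ⟨i, him⟩ ≤ e c := le_trans htfis h3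
            exact hσ.2.2 ⟨i, him⟩ he ⟨c, ⟨hbc, hec⟩, unassignedBefore_iff.mpr h2⟩
          rw [hempty]
          simp
        · -- both assign : the main case
          have hODc : OnDuty b e cv (t ⟨i, him⟩) := hσ.2.1 _ cv he
          have hUnc : UnassignedBefore σ ⟨i, him⟩ cv := by
            intro j hj hje
            have := hσ.1 j ⟨i, him⟩ cv hje he
            exact absurd this (ne_of_lt hj)
          have hcvA : cv ∉ Asg σ i := unassignedBefore_iff.mp hUnc
          have hA : ∀ c : C, c ∈ Asg σ (i + 1) ↔ c ∈ Asg σ i ∨ c = cv := by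
            intro c
            rw [mem_Asg_succ him, he]
            simp [eq_comm]
          have hA' : ∀ c : C, c ∈ Asg σ (i + 1) → c ≠ cv → c ∈ Asg σ i := by
            intro c h1 h2
            rcases (hA c).mp h1 with h | h
            · exact h
            · exact absurd h h2
          have hcond' : ∀ c : C, c ∉ Asg σstar i → c ≠ cstar → b c ≤ s → s ≤ e c → x ≤ e c := by
            intro c h1 h2 h3 h4
            exact hcond c (hAs'' c h1 h2) h3 h4
          by_cases hcc : cv = cstar
          · -- both assign the same crew member
            subst hcc
            have eL : LS e σstar σ (i + 1) s = LS e σstar σ i s := by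
              ext c
              constructor
              · rintro ⟨h1, h2, h3⟩
                have hne : c ≠ cv := fun hc => h2 ((hA c).mpr (Or.inr hc))
                exact ⟨hAs' c h1 hne, fun hc => h2 ((hA c).mpr (Or.inl hc)), h3⟩
              · rintro ⟨h1, h2, h3⟩
                have hne : c ≠ cv := fun hc => hcsA (by rw [← hc]; exact h1)
                refine ⟨(hAs c).mpr (Or.inl h1), fun hc => ?_, h3⟩
                rcases (hA c).mp hc with hc' | hc'
                · exact h2 hc'
                · exact hne hc'
            have eR : LS e σ σstar (i + 1) x = LS e σ σstar i x := by
              ext c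
              constructor
              · rintro ⟨h1, h2, h3⟩
                have hne : c ≠ cv := fun hc => h2 ((hAs c).mpr (Or.inr hc))
                exact ⟨hA' c h1 hne, fun hc => h2 ((hAs c).mpr (Or.inl hc)), h3⟩
              · rintro ⟨h1, h2, h3⟩
                have hne : c ≠ cv := fun hc => hcvA (by rw [← hc]; exact h1)
                refine ⟨(hA c).mpr (Or.inl h1), fun hc => ?_, h3⟩
                rcases (hAs c).mp hc with hc' | hc'
                · exact h2 hc'
                · exact hne hc'
            rw [eL, eR]
            by_cases h1 : s ≤ e cv
            · by_cases h2 : x ≤ e cv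
              · refine IH him.le s x hsx htj ?_
                intro c hc hb hs'
                by_cases hcs : c = cv
                · rw [hcs]; exact h2
                · exact hcond' c hc hcs hb hs'
              · -- s ≤ e cv < x
                have step1 := IH him.le s (e cv) h1 htj (by
                  intro c hc hb hs'
                  by_cases hcs : c = cv
                  · rw [hcs]
                  · exact le_trans (le_of_lt (lt_of_not_ge h2)) (hcond' c hc hcs hb hs'))
                refine le_trans step1 (Set.ncard_le_ncard ?_ (Set.toFinite _))
                rintro c ⟨hc1, hc2, hc3⟩
                have hne : c ≠ cv := fun hc => hcvA (by rw [← hc]; exact hc1)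
                exact ⟨hc1, hc2, hcond' c hc2 hne (b_mem_le hσ hc1 htj) (le_trans h1 hc3)⟩
            · refine IH him.le s x hsx htj ?_
              intro c hc hb hs'
              by_cases hcs : c = cv
              · rw [hcs] at hs'; exact absurd hs' h1
              · exact hcond' c hc hcs hb hs'
          · -- cv ≠ cstar
            by_cases hx : x ≤ e cstar
            · -- D1 : the EFF pick has end time at least x
              have hcondi : ∀ c : C, c ∉ Asg σstar i → b c ≤ s → s ≤ e c → x ≤ e c := by
                intro c h1 hb hs'
                by_cases hcs : c = cstar
                · rw [hcs]; exact hx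
                · exact hcond' c h1 hcs hb hs'
              by_cases hcvAs : cv ∈ Asg σstar i
              · -- σ's pick was already used by σstar : route via M = LS _ _ i (t i)
                have hM0 := IH him.le (t ⟨i, him⟩) x (le_trans htfis hsx) htjfi
                  (fun c h1 hb he' => le_trans hx (hmin c h1 ⟨hb, he'⟩))
                have hkey : insert cv (LS e σstar σ (i + 1) s \ {cstar}) ⊆
                    LS e σstar σ i (t ⟨i, him⟩) := by
                  intro c hc
                  rcases Set.mem_insert_iff.mp hc with rfl | ⟨⟨h1, h2, h3⟩, hne⟩
                  · exact ⟨hcvAs, hcvA, hODc.2⟩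
                  · have hne' : c ≠ cstar := by simpa using hne
                    exact ⟨hAs' c h1 hne', fun hc2 => h2 ((hA c).mpr (Or.inl hc2)),
                      le_trans htfis h3⟩
                have hcvnot : cv ∉ LS e σstar σ (i + 1) s \ {cstar} := by
                  rintro ⟨⟨_, h2, _⟩, _⟩
                  exact h2 ((hA cv).mpr (Or.inr rfl))
                have hstep : (LS e σstar σ (i + 1) s \ {cstar}).ncard + 1 ≤
                    (LS e σstar σ i (t ⟨i, him⟩)).ncard :=
                  ncard_insert_le_of_subset hkey hcvnot (Set.toFinite _) (Set.toFinite _)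
                by_cases hcsA2 : cstar ∈ Asg σ i
                · have hL'e : LS e σstar σ (i + 1) s \ {cstar} = LS e σstar σ (i + 1) s :=
                    Set.diff_singleton_eq_self (by
                      rintro ⟨_, h2, _⟩
                      exact h2 ((hA cstar).mpr (Or.inl hcsA2)))
                  have hcsRx : cstar ∈ LS e σ σstar i x := ⟨hcsA2, hcsA, hx⟩
                  have hd : (LS e σ σstar i x \ {cstar}).ncard + 1 = (LS e σ σstar i x).ncard :=
                    Set.ncard_diff_singleton_add_one hcsRx (Set.toFinite _)
                  have hsub2 : LS e σ σstar i x \ {cstar} ⊆ LS e σ σstar (i + 1) x := by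
                    rintro c ⟨⟨h1, h2, h3⟩, hne⟩
                    have hne' : c ≠ cstar := by simpa using hne
                    exact ⟨(hA c).mpr (Or.inl h1), hAs'' c h2 hne', h3⟩
                  have hfin : (LS e σ σstar i x \ {cstar}).ncard ≤ (LS e σ σstar (i + 1) x).ncard :=
                    Set.ncard_le_ncard hsub2 (Set.toFinite _)
                  rw [hL'e] at hstep
                  omega
                · have hgen : (LS e σstar σ (i + 1) s).ncard ≤
                      (LS e σstar σ (i + 1) s \ {cstar}).ncard + 1 :=
                    ncard_le_diff_add_one (Set.toFinite _) cstar
                  have hRsub : LS e σ σstar i x ⊆ LS e σ σstar (i + 1) x := by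
                    rintro c ⟨h1, h2, h3⟩
                    have hne' : c ≠ cstar := fun hc2 => hcsA2 (by rw [← hc2]; exact h1)
                    exact ⟨(hA c).mpr (Or.inl h1), hAs'' c h2 hne', h3⟩
                  have hfin : (LS e σ σstar i x).ncard ≤ (LS e σ σstar (i + 1) x).ncard :=
                    Set.ncard_le_ncard hRsub (Set.toFinite _)
                  omega
              · -- σ's pick is fresh for σstar, hence long
                have hxcv : x ≤ e cv := le_trans hx (hmin cv hcvAs hODc)
                have hIH := IH him.le s x hsx htj hcondi
                have hsub2 : insert cv (LS e σ σstar i x \ {cstar}) ⊆ LS e σ σstar (i + 1) x := by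
                  intro c hc
                  rcases Set.mem_insert_iff.mp hc with rfl | ⟨⟨h1, h2, h3⟩, hne⟩
                  · exact ⟨(hA c).mpr (Or.inr rfl), hAs'' c hcvAs hcc, hxcv⟩
                  · have hne' : c ≠ cstar := by simpa using hne
                    exact ⟨(hA c).mpr (Or.inl h1), hAs'' c h2 hne', h3⟩
                have hcvnotR : cv ∉ LS e σ σstar i x \ {cstar} := by
                  rintro ⟨⟨h1, _, _⟩, _⟩
                  exact hcvA h1
                have hstepR : (LS e σ σstar i x \ {cstar}).ncard + 1 ≤
                    (LS e σ σstar (i + 1) x).ncard :=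
                  ncard_insert_le_of_subset hsub2 hcvnotR (Set.toFinite _) (Set.toFinite _)
                have hdgen : (LS e σ σstar i x).ncard ≤ (LS e σ σstar i x \ {cstar}).ncard + 1 :=
                  ncard_le_diff_add_one (Set.toFinite _) cstar
                by_cases hcsA2 : cstar ∈ Asg σ i
                · have hLsub : LS e σstar σ (i + 1) s ⊆ LS e σstar σ i s := by
                    rintro c ⟨h1, h2, h3⟩
                    have hne : c ≠ cstar := fun hc2 =>
                      h2 ((hA c).mpr (Or.inl (by rw [hc2]; exact hcsA2)))
                    exact ⟨hAs' c h1 hne, fun hc2 => h2 ((hA c).mpr (Or.inl hc2)), h3⟩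
                  have h1 : (LS e σstar σ (i + 1) s).ncard ≤ (LS e σstar σ i s).ncard :=
                    Set.ncard_le_ncard hLsub (Set.toFinite _)
                  omega
                · have hLsub : LS e σstar σ (i + 1) s ⊆ insert cstar (LS e σstar σ i s) := by
                    rintro c ⟨h1, h2, h3⟩
                    rcases (hAs c).mp h1 with h | h
                    · exact Set.mem_insert_iff.mpr (Or.inr
                        ⟨h, fun hc2 => h2 ((hA c).mpr (Or.inl hc2)), h3⟩)
                    · exact Set.mem_insert_iff.mpr (Or.inl h)
                  have h1 : (LS e σstar σ (i + 1) s).ncard ≤ (LS e σstar σ i s).ncard + 1 :=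
                    le_trans (Set.ncard_le_ncard hLsub (Set.toFinite _)) (Set.ncard_insert_le _ _)
                  have hRye : LS e σ σstar i x \ {cstar} = LS e σ σstar i x :=
                    Set.diff_singleton_eq_self (fun hmem => hcsA2 hmem.1)
                  rw [hRye] at hstepR
                  omega
            · -- D2 : e cstar < x
              have hxlt : e cstar < x := lt_of_not_ge hx
              by_cases hscs : s ≤ e cstar
              · -- D2b : s ≤ e cstar < x ; work with Ry = LS _ _ i (e cstar)
                have hIHy := IH him.le s (e cstar) hscs htj (by
                  intro c h1 hb hs'
                  by_cases hcs : c = cstar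
                  · rw [hcs]
                  · exact le_trans hxlt.le (hcond' c h1 hcs hb hs'))
                have hRyRx : LS e σ σstar i (e cstar) \ {cstar} ⊆ LS e σ σstar i x := by
                  rintro c ⟨⟨h1, h2, h3⟩, hne⟩
                  have hne' : c ≠ cstar := by simpa using hne
                  exact ⟨h1, h2, hcond c (hAs'' c h2 hne') (b_mem_le hσ h1 htj)
                    (le_trans hscs h3)⟩
                have hRyRxc : (LS e σ σstar i (e cstar) \ {cstar}).ncard ≤
                    (LS e σ σstar i x).ncard := Set.ncard_le_ncard hRyRx (Set.toFinite _)
                have hdRygen : (LS e σ σstar i (e cstar)).ncard ≤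
                    (LS e σ σstar i (e cstar) \ {cstar}).ncard + 1 :=
                  ncard_le_diff_add_one (Set.toFinite _) cstar
                by_cases hcvAs : cv ∈ Asg σstar i
                · -- σ's pick was already used by σstar
                  have hRsub : LS e σ σstar i x ⊆ LS e σ σstar (i + 1) x := by
                    rintro c ⟨h1, h2, h3⟩
                    have hne' : c ≠ cstar := fun hc2 => absurd h3 (by rw [hc2]; exact hx)
                    exact ⟨(hA c).mpr (Or.inl h1), hAs'' c h2 hne', h3⟩
                  have hRsubc : (LS e σ σstar i x).ncard ≤ (LS e σ σstar (i + 1) x).ncard :=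
                    Set.ncard_le_ncard hRsub (Set.toFinite _)
                  by_cases hscv : s ≤ e cv
                  · -- cv still counted at threshold s
                    have hcvLs : cv ∈ LS e σstar σ i s := ⟨hcvAs, hcvA, hscv⟩
                    have hdLs : (LS e σstar σ i s \ {cv}).ncard + 1 = (LS e σstar σ i s).ncard :=
                      Set.ncard_diff_singleton_add_one hcvLs (Set.toFinite _)
                    by_cases hcsA2 : cstar ∈ Asg σ i
                    · have hLsub2 : LS e σstar σ (i + 1) s ⊆ LS e σstar σ i s \ {cv} := by
                        rintro c ⟨h1, h2, h3⟩
                        have hnecv : c ≠ cv := fun hc2 => h2 ((hA c).mpr (Or.inr hc2))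
                        have hnecs : c ≠ cstar := fun hc2 =>
                          h2 ((hA c).mpr (Or.inl (by rw [hc2]; exact hcsA2)))
                        exact ⟨⟨hAs' c h1 hnecs, fun hc2 => h2 ((hA c).mpr (Or.inl hc2)), h3⟩,
                          by simpa using hnecv⟩
                      have hL1 : (LS e σstar σ (i + 1) s).ncard ≤
                          (LS e σstar σ i s \ {cv}).ncard :=
                        Set.ncard_le_ncard hLsub2 (Set.toFinite _)
                      have hcsRy : cstar ∈ LS e σ σstar i (e cstar) := ⟨hcsA2, hcsA, le_refl _⟩
                      have hdRy : (LS e σ σstar i (e cstar) \ {cstar}).ncard + 1 =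
                          (LS e σ σstar i (e cstar)).ncard :=
                        Set.ncard_diff_singleton_add_one hcsRy (Set.toFinite _)
                      omega
                    · have hLsub2 : LS e σstar σ (i + 1) s ⊆
                          insert cstar (LS e σstar σ i s \ {cv}) := by
                        rintro c ⟨h1, h2, h3⟩
                        have hnecv : c ≠ cv := fun hc2 => h2 ((hA c).mpr (Or.inr hc2))
                        rcases (hAs c).mp h1 with h | h
                        · exact Set.mem_insert_iff.mpr (Or.inr
                            ⟨⟨h, fun hc2 => h2 ((hA c).mpr (Or.inl hc2)), h3⟩,
                              by simpa using hnecv⟩)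
                        · exact Set.mem_insert_iff.mpr (Or.inl h)
                      have hL1 : (LS e σstar σ (i + 1) s).ncard ≤
                          (LS e σstar σ i s \ {cv}).ncard + 1 :=
                        le_trans (Set.ncard_le_ncard hLsub2 (Set.toFinite _))
                          (Set.ncard_insert_le _ _)
                      have hRye : LS e σ σstar i (e cstar) \ {cstar} = LS e σ σstar i (e cstar) :=
                        Set.diff_singleton_eq_self (fun hmem => hcsA2 hmem.1)
                      rw [hRye] at hRyRxc
                      omega
                  · -- e cv < s : route via M = LS _ _ i (t i) against threshold e cstar
                    have hIHM := IH him.le (t ⟨i, him⟩) (e cstar) hODstar.2 htjfi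
                      (fun c h1 hb he' => hmin c h1 ⟨hb, he'⟩)
                    have hkey : insert cv (LS e σstar σ (i + 1) s \ {cstar}) ⊆
                        LS e σstar σ i (t ⟨i, him⟩) := by
                      intro c hc
                      rcases Set.mem_insert_iff.mp hc with rfl | ⟨⟨h1, h2, h3⟩, hne⟩
                      · exact ⟨hcvAs, hcvA, hODc.2⟩
                      · have hne' : c ≠ cstar := by simpa using hne
                        exact ⟨hAs' c h1 hne', fun hc2 => h2 ((hA c).mpr (Or.inl hc2)),
                          le_trans htfis h3⟩
                    have hcvnot : cv ∉ LS e σstar σ (i + 1) s \ {cstar} := by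
                      rintro ⟨⟨_, h2, _⟩, _⟩
                      exact h2 ((hA cv).mpr (Or.inr rfl))
                    have hstep : (LS e σstar σ (i + 1) s \ {cstar}).ncard + 1 ≤
                        (LS e σstar σ i (t ⟨i, him⟩)).ncard :=
                      ncard_insert_le_of_subset hkey hcvnot (Set.toFinite _) (Set.toFinite _)
                    by_cases hcsA2 : cstar ∈ Asg σ i
                    · have hL'e : LS e σstar σ (i + 1) s \ {cstar} = LS e σstar σ (i + 1) s :=
                        Set.diff_singleton_eq_self (by
                          rintro ⟨_, h2, _⟩
                          exact h2 ((hA cstar).mpr (Or.inl hcsA2)))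
                      have hcsRy : cstar ∈ LS e σ σstar i (e cstar) := ⟨hcsA2, hcsA, le_refl _⟩
                      have hdRy : (LS e σ σstar i (e cstar) \ {cstar}).ncard + 1 =
                          (LS e σ σstar i (e cstar)).ncard :=
                        Set.ncard_diff_singleton_add_one hcsRy (Set.toFinite _)
                      rw [hL'e] at hstep
                      omega
                    · have hgen : (LS e σstar σ (i + 1) s).ncard ≤
                          (LS e σstar σ (i + 1) s \ {cstar}).ncard + 1 :=
                        ncard_le_diff_add_one (Set.toFinite _) cstar
                      have hRye : LS e σ σstar i (e cstar) \ {cstar} = LS e σ σstar i (e cstar) :=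
                        Set.diff_singleton_eq_self (fun hmem => hcsA2 hmem.1)
                      rw [hRye] at hRyRxc
                      omega
                · -- σ's pick is fresh for σstar
                  have hycv : e cstar ≤ e cv := hmin cv hcvAs hODc
                  have hxcv : x ≤ e cv := hcond cv (hAs'' cv hcvAs hcc)
                    (le_trans hODc.1 htfis) (le_trans hscs hycv)
                  have hsub2 : insert cv (LS e σ σstar i x) ⊆ LS e σ σstar (i + 1) x := by
                    intro c hc
                    rcases Set.mem_insert_iff.mp hc with rfl | ⟨h1, h2, h3⟩
                    · exact ⟨(hA c).mpr (Or.inr rfl), hAs'' c hcvAs hcc, hxcv⟩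
                    · have hne' : c ≠ cstar := fun hc2 => absurd h3 (by rw [hc2]; exact hx)
                      exact ⟨(hA c).mpr (Or.inl h1), hAs'' c h2 hne', h3⟩
                  have hcvnotR : cv ∉ LS e σ σstar i x := fun hmem => hcvA hmem.1
                  have hstepR : (LS e σ σstar i x).ncard + 1 ≤ (LS e σ σstar (i + 1) x).ncard :=
                    ncard_insert_le_of_subset hsub2 hcvnotR (Set.toFinite _) (Set.toFinite _)
                  by_cases hcsA2 : cstar ∈ Asg σ i
                  · have hLsub : LS e σstar σ (i + 1) s ⊆ LS e σstar σ i s := by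
                      rintro c ⟨h1, h2, h3⟩
                      have hne : c ≠ cstar := fun hc2 =>
                        h2 ((hA c).mpr (Or.inl (by rw [hc2]; exact hcsA2)))
                      exact ⟨hAs' c h1 hne, fun hc2 => h2 ((hA c).mpr (Or.inl hc2)), h3⟩
                    have hL1 : (LS e σstar σ (i + 1) s).ncard ≤ (LS e σstar σ i s).ncard :=
                      Set.ncard_le_ncard hLsub (Set.toFinite _)
                    have hcsRy : cstar ∈ LS e σ σstar i (e cstar) := ⟨hcsA2, hcsA, le_refl _⟩
                    have hdRy : (LS e σ σstar i (e cstar) \ {cstar}).ncard + 1 =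
                        (LS e σ σstar i (e cstar)).ncard :=
                      Set.ncard_diff_singleton_add_one hcsRy (Set.toFinite _)
                    omega
                  · have hLsub : LS e σstar σ (i + 1) s ⊆ insert cstar (LS e σstar σ i s) := by
                      rintro c ⟨h1, h2, h3⟩
                      rcases (hAs c).mp h1 with h | h
                      · exact Set.mem_insert_iff.mpr (Or.inr
                          ⟨h, fun hc2 => h2 ((hA c).mpr (Or.inl hc2)), h3⟩)
                      · exact Set.mem_insert_iff.mpr (Or.inl h)
                    have hL1 : (LS e σstar σ (i + 1) s).ncard ≤ (LS e σstar σ i s).ncard + 1 :=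
                      le_trans (Set.ncard_le_ncard hLsub (Set.toFinite _))
                        (Set.ncard_insert_le _ _)
                    have hRye : LS e σ σstar i (e cstar) \ {cstar} = LS e σ σstar i (e cstar) :=
                      Set.diff_singleton_eq_self (fun hmem => hcsA2 hmem.1)
                    rw [hRye] at hRyRxc
                    omega
              · -- D2a : e cstar < s
                have hcondi : ∀ c : C, c ∉ Asg σstar i → b c ≤ s → s ≤ e c → x ≤ e c := by
                  intro c h1 hb hs'
                  by_cases hcs : c = cstar
                  · rw [hcs] at hs'; exact absurd hs' hscs
                  · exact hcond' c h1 hcs hb hs'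
                have hIH := IH him.le s x hsx htj hcondi
                have hLsub : LS e σstar σ (i + 1) s ⊆ LS e σstar σ i s := by
                  rintro c ⟨h1, h2, h3⟩
                  have hne : c ≠ cstar := fun hc2 => hscs (by rw [← hc2]; exact h3)
                  exact ⟨hAs' c h1 hne, fun hc2 => h2 ((hA c).mpr (Or.inl hc2)), h3⟩
                have hRsub : LS e σ σstar i x ⊆ LS e σ σstar (i + 1) x := by
                  rintro c ⟨h1, h2, h3⟩
                  have hne : c ≠ cstar := fun hc2 => absurd h3 (by rw [hc2]; exact hx)
                  exact ⟨(hA c).mpr (Or.inl h1), hAs'' c h2 hne, h3⟩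
                calc (LS e σstar σ (i + 1) s).ncard
                    ≤ (LS e σstar σ i s).ncard := Set.ncard_le_ncard hLsub (Set.toFinite _)
                  _ ≤ (LS e σ σstar i x).ncard := hIH
                  _ ≤ (LS e σ σstar (i + 1) x).ncard := Set.ncard_le_ncard hRsub (Set.toFinite _)

end EFFAux

/-- Proposition 1 (optimality of the EFF recovery policy, pathwise form):
any policy following the EFF rule keeps at least as many reserve crew members
available as any other recovery policy, at every point in time. -/
theorem eff_policy_optimal
    {C : Type*} [Fintype C] (b e : C → ℝ) (hbe : ∀ c, b c ≤ e c)
    {m : ℕ} (t : Fin m → ℝ) (ht : Monotone t)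
    (σstar σ : Fin m → Option C)
    (hstar : IsPolicy b e t σstar) (heff : FollowsEFF b e t σstar)
    (hσ : IsPolicy b e t σ) :
    ∀ u : ℝ, NAvail b e t σ u ≤ NAvail b e t σstar u := by
  intro u
  classical
  set F : Finset (Fin m) := Finset.univ.filter (fun j => t j ≤ u) with hF
  have hmemF : ∀ j : Fin m, j ∈ F ↔ t j ≤ u := by
    intro j
    simp [hF]
  have hnc : ∀ j : Fin m, t j ≤ u ↔ (j : ℕ) < F.card := by
    intro j
    constructor
    · intro hj
      have hsub : Finset.Iic j ⊆ F := by
        intro k hk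
        rw [hmemF]
        exact le_trans (ht (Finset.mem_Iic.mp hk)) hj
      have h1 := Finset.card_le_card hsub
      rw [Fin.card_Iic] at h1
      omega
    · intro hj
      by_contra hjF
      have hsub : F ⊆ Finset.Iio j := by
        intro k hk
        rw [Finset.mem_Iio]
        rcases lt_or_ge k j with h | h
        · exact h
        · exact absurd (le_trans (ht h) ((hmemF k).mp hk)) hjF
      have h1 := Finset.card_le_card hsub
      rw [Fin.card_Iio] at h1
      omega
  set n := F.card with hn
  have hnm : n ≤ m := by
    have := Finset.card_le_univ F
    simpa using this
  have htsn : ∀ j : Fin m, (j : ℕ) < n → t j ≤ u := fun j hj => (hnc j).mpr hj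
  -- the set of available crew is on-duty minus assigned-in-prefix
  have hset : ∀ τ : Fin m → Option C, IsPolicy b e t τ →
      {c : C | OnDuty b e c u ∧ ∀ j : Fin m, τ j = some c → u < t j}
        = {c : C | OnDuty b e c u} \ {c : C | c ∈ EFFAux.Asg τ n ∧ u ≤ e c} := by
    intro τ hτ
    ext c
    constructor
    · rintro ⟨hOD, hall⟩
      refine ⟨hOD, ?_⟩
      rintro ⟨⟨j, hj, hje⟩, -⟩
      exact absurd (hall j hje) (not_lt.mpr (htsn j hj))
    · rintro ⟨hOD, hnot⟩
      refine ⟨hOD, fun j hje => ?_⟩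
      by_contra h
      push_neg at h
      exact hnot ⟨⟨j, (hnc j).mp h, hje⟩, hOD.2⟩
  have hsubOD : ∀ τ : Fin m → Option C, IsPolicy b e t τ →
      {c : C | c ∈ EFFAux.Asg τ n ∧ u ≤ e c} ⊆ {c : C | OnDuty b e c u} := by
    rintro τ hτ c ⟨h1, h2⟩
    exact ⟨EFFAux.b_mem_le hτ h1 htsn, h2⟩
  -- the key counting fact
  have hcount : {c : C | c ∈ EFFAux.Asg σstar n ∧ u ≤ e c}.ncard ≤
      {c : C | c ∈ EFFAux.Asg σ n ∧ u ≤ e c}.ncard := by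
    have hinv := EFFAux.inv1 b e t ht σstar σ hstar heff hσ n hnm u u le_rfl htsn
      (fun c _ _ h => h)
    set Scom : Set C := {c : C | c ∈ EFFAux.Asg σstar n ∧ c ∈ EFFAux.Asg σ n ∧ u ≤ e c}
      with hScom
    have hdeq1 : {c : C | c ∈ EFFAux.Asg σstar n ∧ u ≤ e c}
        = EFFAux.LS e σstar σ n u ∪ Scom := by
      ext c
      simp only [hScom, EFFAux.LS, Set.mem_setOf_eq, Set.mem_union]
      tauto
    have hdeq2 : {c : C | c ∈ EFFAux.Asg σ n ∧ u ≤ e c}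
        = EFFAux.LS e σ σstar n u ∪ Scom := by
      ext c
      simp only [hScom, EFFAux.LS, Set.mem_setOf_eq, Set.mem_union]
      tauto
    have hdis1 : Disjoint (EFFAux.LS e σstar σ n u) Scom := by
      rw [Set.disjoint_left]
      rintro c ⟨-, h2, -⟩ ⟨-, h4, -⟩
      exact h2 h4
    have hdis2 : Disjoint (EFFAux.LS e σ σstar n u) Scom := by
      rw [Set.disjoint_left]
      rintro c ⟨-, h2, -⟩ ⟨h3, -, -⟩
      exact h2 h3
    rw [hdeq1, hdeq2, Set.ncard_union_eq hdis1 (Set.toFinite _) (Set.toFinite _),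
      Set.ncard_union_eq hdis2 (Set.toFinite _) (Set.toFinite _)]
    omega
  -- put everything together
  show ({c : C | OnDuty b e c u ∧ ∀ j : Fin m, σ j = some c → u < t j}).ncard ≤
    ({c : C | OnDuty b e c u ∧ ∀ j : Fin m, σstar j = some c → u < t j}).ncard
  rw [hset σ hσ, hset σstar hstar, Set.ncard_diff (hsubOD σ hσ) (Set.toFinite _),
    Set.ncard_diff (hsubOD σstar hstar) (Set.toFinite _)]
  exact Nat.sub_le_sub_left hcount _
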